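/- Stability of the IRMGL iterates with respect to data perturbations: Let (δ_j) be a sequence of positive reals with δ_j → 0, let v_j ∈ V satisfy ‖v_j − v‖ ≤ δ_j, and let initial points u₀^{(j)} ∈ U satisfy u₀^{(j)} → u₀ as j → ∞. Let (u_k^{(j)})_k denote the IRMGL iterates with data v_j started at u₀^{(j)}, and let (u_k)_k denote the IRMGL iterates with exact data v started at u₀. Then for every fixed k ≥ 0, u_k^{(j)} → u_k as j → ∞. -/

import Mathlib

open scoped BigOperators RealInnerProductSpace Classical
open ContinuousLinearMap Filter

noncomputable section

/-- Weight matrix induced by a signal `x` on the image graph. -/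
def wMat {n : ℕ} (g : Fin n → Fin n → ℝ) (σ : ℝ) (x : EuclideanSpace ℝ (Fin n)) :
    Matrix (Fin n) (Fin n) ℝ :=
  Matrix.of fun a b => g a b * Real.exp (-(x a - x b) ^ 2 / σ)

/-- Degree function of the graph induced by `x`. -/
def degFun {n : ℕ} (g : Fin n → Fin n → ℝ) (σ : ℝ) (x : EuclideanSpace ℝ (Fin n))
    (a : Fin n) : ℝ :=
  ∑ b, wMat g σ x a b

/-- Graph Laplacian matrix `Δ_x = D_x − W_x`. -/
def lapMat {n : ℕ} (g : Fin n → Fin n → ℝ) (σ : ℝ) (x : EuclideanSpace ℝ (Fin n)) :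
    Matrix (Fin n) (Fin n) ℝ :=
  Matrix.diagonal (degFun g σ x) - wMat g σ x

/-- Graph Laplacian as a continuous linear map on Euclidean space. -/
def lapCLM {n : ℕ} (g : Fin n → Fin n → ℝ) (σ : ℝ) (x : EuclideanSpace ℝ (Fin n)) :
    EuclideanSpace ℝ (Fin n) →L[ℝ] EuclideanSpace ℝ (Fin n) :=
  LinearMap.toContinuousLinearMap (Matrix.toEuclideanLin (lapMat g σ x))

/-- Adaptive step size `α_w(u)`. -/
def alphaStep {n m : ℕ} (A : EuclideanSpace ℝ (Fin n) →L[ℝ] EuclideanSpace ℝ (Fin m))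
    (η₀ η₁ : ℝ) (w : EuclideanSpace ℝ (Fin m)) (u : EuclideanSpace ℝ (Fin n)) : ℝ :=
  if adjoint A (A u - w) ≠ 0 then
    min (η₀ * ‖A u - w‖ ^ 2 / ‖adjoint A (A u - w)‖ ^ 2) η₁
  else η₁

/-- Adaptive weight `β_w(u)`. -/
def betaStep {n m : ℕ} (g : Fin n → Fin n → ℝ) (σ : ℝ)
    (A : EuclideanSpace ℝ (Fin n) →L[ℝ] EuclideanSpace ℝ (Fin m))
    (ν₀ ν₁ ν₂ : ℝ) (w : EuclideanSpace ℝ (Fin m)) (u : EuclideanSpace ℝ (Fin n)) : ℝ :=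
  if lapCLM g σ u u ≠ 0 then
    min (min (ν₀ * ‖A u - w‖ ^ 2 / ‖lapCLM g σ u u‖) (ν₁ / ‖lapCLM g σ u u‖)) ν₂
  else 0

/-- One step of the IRMGL iteration with data `w`. -/
def irmglStep {n m : ℕ} (g : Fin n → Fin n → ℝ) (σ : ℝ)
    (A : EuclideanSpace ℝ (Fin n) →L[ℝ] EuclideanSpace ℝ (Fin m))
    (η₀ η₁ ν₀ ν₁ ν₂ : ℝ) (w : EuclideanSpace ℝ (Fin m))
    (u : EuclideanSpace ℝ (Fin n)) : EuclideanSpace ℝ (Fin n) :=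
  u - alphaStep A η₀ η₁ w u • adjoint A (A u - w)
    - betaStep g σ A ν₀ ν₁ ν₂ w u • lapCLM g σ u u

/-- The IRMGL iterates with data `w` started at `u₀`. -/
def irmglSeq {n m : ℕ} (g : Fin n → Fin n → ℝ) (σ : ℝ)
    (A : EuclideanSpace ℝ (Fin n) →L[ℝ] EuclideanSpace ℝ (Fin m))
    (η₀ η₁ ν₀ ν₁ ν₂ : ℝ) (w : EuclideanSpace ℝ (Fin m))
    (u₀ : EuclideanSpace ℝ (Fin n)) : ℕ → EuclideanSpace ℝ (Fin n)
  | 0 => u₀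
  | k + 1 => irmglStep g σ A η₀ η₁ ν₀ ν₁ ν₂ w
      (irmglSeq g σ A η₀ η₁ ν₀ ν₁ ν₂ w u₀ k)

end

section Aux

variable {n m : ℕ}

/-- Continuity of `u ↦ Δ_u u`. -/
lemma lapSelf_continuous (g : Fin n → Fin n → ℝ) (σ : ℝ) :
    Continuous fun u : EuclideanSpace ℝ (Fin n) => lapCLM g σ u u := by
  have hcoord : ∀ a : Fin n, Continuous fun u : EuclideanSpace ℝ (Fin n) => u a := by
    intro a
    exact (continuous_apply a).comp (PiLp.continuous_ofLp 2 (fun _ : Fin n => ℝ))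
  have hent : ∀ a b, Continuous fun u : EuclideanSpace ℝ (Fin n) => lapMat g σ u a b := by
    intro a b
    have hw : ∀ a b, Continuous fun u : EuclideanSpace ℝ (Fin n) => wMat g σ u a b := by
      intro a b
      simp only [wMat, Matrix.of_apply]
      exact continuous_const.mul ((Real.continuous_exp.comp
        (((((hcoord a).sub (hcoord b)).pow 2).neg).div_const σ)))
    have hd : Continuous fun u : EuclideanSpace ℝ (Fin n) =>
        Matrix.diagonal (degFun g σ u) a b := by
      by_cases h : a = b
      · subst h
        simp only [Matrix.diagonal_apply_eq, degFun]
        exact continuous_finset_sum _ fun c _ => hw a c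
      · simp only [Matrix.diagonal_apply_ne _ h]
        exact continuous_const
    simp only [lapMat, Matrix.sub_apply]
    exact hd.sub (hw a b)
  have : Continuous fun u : EuclideanSpace ℝ (Fin n) =>
      (WithLp.equiv 2 (Fin n → ℝ)).symm
        (Matrix.mulVec (lapMat g σ u) (WithLp.equiv 2 (Fin n → ℝ) u)) := by
    apply (PiLp.continuous_toLp 2 (fun _ : Fin n => ℝ)).comp
    apply continuous_pi
    intro a
    simp only [Matrix.mulVec, dotProduct]
    exact continuous_finset_sum _ fun b _ => (hent a b).mul (hcoord b)
  convert this using 2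
  rfl

lemma alphaStep_nonneg (A : EuclideanSpace ℝ (Fin n) →L[ℝ] EuclideanSpace ℝ (Fin m))
    {η₀ η₁ : ℝ} (hη₀ : 0 < η₀) (hη₁ : 0 < η₁) (w : EuclideanSpace ℝ (Fin m))
    (u : EuclideanSpace ℝ (Fin n)) : 0 ≤ alphaStep A η₀ η₁ w u := by
  unfold alphaStep
  split_ifs
  · exact le_min (by positivity) hη₁.le
  · exact hη₁.le

lemma alphaStep_le (A : EuclideanSpace ℝ (Fin n) →L[ℝ] EuclideanSpace ℝ (Fin m))
    (η₀ η₁ : ℝ) (w : EuclideanSpace ℝ (Fin m)) (u : EuclideanSpace ℝ (Fin n)) :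
    alphaStep A η₀ η₁ w u ≤ η₁ := by
  unfold alphaStep
  split_ifs
  · exact min_le_right _ _
  · exact le_refl _

lemma betaStep_nonneg (g : Fin n → Fin n → ℝ) (σ : ℝ)
    (A : EuclideanSpace ℝ (Fin n) →L[ℝ] EuclideanSpace ℝ (Fin m))
    {ν₀ ν₁ ν₂ : ℝ} (hν₀ : 0 < ν₀) (hν₁ : 0 < ν₁) (hν₂ : 0 < ν₂)
    (w : EuclideanSpace ℝ (Fin m)) (u : EuclideanSpace ℝ (Fin n)) :
    0 ≤ betaStep g σ A ν₀ ν₁ ν₂ w u := by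
  unfold betaStep
  split_ifs
  · exact le_min (le_min (by positivity) (by positivity)) hν₂.le
  · exact le_refl _

lemma betaStep_le (g : Fin n → Fin n → ℝ) (σ : ℝ)
    (A : EuclideanSpace ℝ (Fin n) →L[ℝ] EuclideanSpace ℝ (Fin m))
    (ν₀ ν₁ : ℝ) {ν₂ : ℝ} (hν₂ : 0 < ν₂)
    (w : EuclideanSpace ℝ (Fin m)) (u : EuclideanSpace ℝ (Fin n)) :
    betaStep g σ A ν₀ ν₁ ν₂ w u ≤ ν₂ := by
  unfold betaStep
  split_ifs
  · exact min_le_right _ _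
  · exact hν₂.le

/-- Joint sequential continuity of one IRMGL step. -/
lemma irmglStep_tendsto (g : Fin n → Fin n → ℝ) (σ : ℝ)
    (A : EuclideanSpace ℝ (Fin n) →L[ℝ] EuclideanSpace ℝ (Fin m))
    {η₀ η₁ ν₀ ν₁ ν₂ : ℝ}
    (hη₀ : 0 < η₀) (hη₁ : 0 < η₁) (hν₀ : 0 < ν₀) (hν₁ : 0 < ν₁) (hν₂ : 0 < ν₂)
    (w : EuclideanSpace ℝ (Fin m)) (u : EuclideanSpace ℝ (Fin n))
    (wj : ℕ → EuclideanSpace ℝ (Fin m)) (uj : ℕ → EuclideanSpace ℝ (Fin n))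
    (hw : Tendsto wj atTop (nhds w)) (hu : Tendsto uj atTop (nhds u)) :
    Tendsto (fun j => irmglStep g σ A η₀ η₁ ν₀ ν₁ ν₂ (wj j) (uj j)) atTop
      (nhds (irmglStep g σ A η₀ η₁ ν₀ ν₁ ν₂ w u)) := by
  have hr : Tendsto (fun j => A (uj j) - wj j) atTop (nhds (A u - w)) :=
    ((A.continuous.tendsto u).comp hu).sub hw
  have hT : Tendsto (fun j => adjoint A (A (uj j) - wj j)) atTop
      (nhds (adjoint A (A u - w))) := ((adjoint A).continuous.tendsto _).comp hr
  have hL : Tendsto (fun j => lapCLM g σ (uj j) (uj j)) atTop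
      (nhds (lapCLM g σ u u)) := ((lapSelf_continuous g σ).tendsto u).comp hu
  have hrn : Tendsto (fun j => ‖A (uj j) - wj j‖) atTop (nhds ‖A u - w‖) := hr.norm
  have hAlpha : Tendsto
      (fun j => alphaStep A η₀ η₁ (wj j) (uj j) • adjoint A (A (uj j) - wj j)) atTop
      (nhds (alphaStep A η₀ η₁ w u • adjoint A (A u - w))) := by
    by_cases h0 : adjoint A (A u - w) = 0
    · rw [h0, smul_zero]
      refine squeeze_zero_norm (a := fun j => η₁ * ‖adjoint A (A (uj j) - wj j)‖)
        (fun j => ?_) ?_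
      · 
        rw [norm_smul, Real.norm_eq_abs,
          abs_of_nonneg (alphaStep_nonneg A hη₀ hη₁ _ _)]
        exact mul_le_mul_of_nonneg_right (alphaStep_le A η₀ η₁ _ _) (norm_nonneg _)
      · have := (tendsto_const_nhds (x := η₁) (f := atTop)).mul hT.norm
        rw [h0, norm_zero, mul_zero] at this
        exact this
    · have hev : ∀ᶠ j in atTop, adjoint A (A (uj j) - wj j) ≠ 0 :=
        hT.eventually_ne h0
      have hden : ‖adjoint A (A u - w)‖ ^ 2 ≠ 0 := by
        have := norm_pos_iff.mpr h0
        positivity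
      have h1 : Tendsto
          (fun j => min (η₀ * ‖A (uj j) - wj j‖ ^ 2 /
            ‖adjoint A (A (uj j) - wj j)‖ ^ 2) η₁) atTop
          (nhds (min (η₀ * ‖A u - w‖ ^ 2 / ‖adjoint A (A u - w)‖ ^ 2) η₁)) :=
        ((tendsto_const_nhds.mul (hrn.pow 2)).div ((hT.norm).pow 2) hden).min
          tendsto_const_nhds
      have halpha : Tendsto (fun j => alphaStep A η₀ η₁ (wj j) (uj j)) atTop
          (nhds (alphaStep A η₀ η₁ w u)) := by
        rw [alphaStep, if_pos h0]
        refine h1.congr' ?_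
        filter_upwards [hev] with j hj
        rw [alphaStep, if_pos hj]
      exact halpha.smul hT
  have hBeta : Tendsto
      (fun j => betaStep g σ A ν₀ ν₁ ν₂ (wj j) (uj j) • lapCLM g σ (uj j) (uj j)) atTop
      (nhds (betaStep g σ A ν₀ ν₁ ν₂ w u • lapCLM g σ u u)) := by
    by_cases h0 : lapCLM g σ u u = 0
    · rw [h0, smul_zero]
      refine squeeze_zero_norm (a := fun j => ν₂ * ‖lapCLM g σ (uj j) (uj j)‖)
        (fun j => ?_) ?_
      · 
        rw [norm_smul, Real.norm_eq_abs,
          abs_of_nonneg (betaStep_nonneg g σ A hν₀ hν₁ hν₂ _ _)]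
        exact mul_le_mul_of_nonneg_right (betaStep_le g σ A ν₀ ν₁ hν₂ _ _)
          (norm_nonneg _)
      · have := (tendsto_const_nhds (x := ν₂) (f := atTop)).mul hL.norm
        rw [h0, norm_zero, mul_zero] at this
        exact this
    · have hev : ∀ᶠ j in atTop, lapCLM g σ (uj j) (uj j) ≠ 0 := hL.eventually_ne h0
      have hden : ‖lapCLM g σ u u‖ ≠ 0 := norm_ne_zero_iff.mpr h0
      have h1 : Tendsto
          (fun j => min (min (ν₀ * ‖A (uj j) - wj j‖ ^ 2 / ‖lapCLM g σ (uj j) (uj j)‖)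
            (ν₁ / ‖lapCLM g σ (uj j) (uj j)‖)) ν₂) atTop
          (nhds (min (min (ν₀ * ‖A u - w‖ ^ 2 / ‖lapCLM g σ u u‖)
            (ν₁ / ‖lapCLM g σ u u‖)) ν₂)) :=
        ((((tendsto_const_nhds.mul (hrn.pow 2)).div hL.norm hden).min
          (tendsto_const_nhds.div hL.norm hden)).min tendsto_const_nhds)
      have hbeta : Tendsto (fun j => betaStep g σ A ν₀ ν₁ ν₂ (wj j) (uj j)) atTop
          (nhds (betaStep g σ A ν₀ ν₁ ν₂ w u)) := by
        rw [betaStep, if_pos h0]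
        refine h1.congr' ?_
        filter_upwards [hev] with j hj
        rw [betaStep, if_pos hj]
      exact hbeta.smul hL
  simpa only [irmglStep] using (hu.sub hAlpha).sub hBeta

end Aux

/-- Stability of the IRMGL iterates with respect to data perturbations. -/
theorem stmt11 (n m : ℕ) (g : Fin n → Fin n → ℝ) (σ : ℝ) (hσ : 0 < σ)
    (hgsymm : ∀ a b, g a b = g b a) (hgnn : ∀ a b, 0 ≤ g a b) (hgdiag : ∀ a, g a a = 0)
    (A : EuclideanSpace ℝ (Fin n) →L[ℝ] EuclideanSpace ℝ (Fin m))
    (η₀ η₁ ν₀ ν₁ ν₂ : ℝ)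
    (hη₀ : 0 < η₀) (hη₁ : 0 < η₁) (hν₀ : 0 < ν₀) (hν₁ : 0 < ν₁) (hν₂ : 0 < ν₂)
    (udag : EuclideanSpace ℝ (Fin n)) (v : EuclideanSpace ℝ (Fin m)) (hsol : A udag = v)
    (δ : ℕ → ℝ) (hδpos : ∀ j, 0 < δ j) (hδ : Tendsto δ atTop (nhds 0))
    (vj : ℕ → EuclideanSpace ℝ (Fin m)) (hvj : ∀ j, ‖vj j - v‖ ≤ δ j)
    (u₀ : EuclideanSpace ℝ (Fin n)) (u₀j : ℕ → EuclideanSpace ℝ (Fin n))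
    (hu₀j : Tendsto u₀j atTop (nhds u₀)) :
    ∀ k : ℕ,
      Tendsto (fun j => irmglSeq g σ A η₀ η₁ ν₀ ν₁ ν₂ (vj j) (u₀j j) k) atTop
        (nhds (irmglSeq g σ A η₀ η₁ ν₀ ν₁ ν₂ v u₀ k)) := by
  have hv : Tendsto vj atTop (nhds v) := by
    rw [tendsto_iff_norm_sub_tendsto_zero]
    exact squeeze_zero (fun j => norm_nonneg _) hvj hδ
  intro k
  induction k with
  | zero => simpa only [irmglSeq] using hu₀j
  | succ k ih =>
      simpa only [irmglSeq] using
        irmglStep_tendsto g σ A hη₀ hη₁ hν₀ hν₁ hν₂ v _ vj _ hv ih
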